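/- Let X be a centered Gaussian process on [0,∞), self-similar of order β ∈ (0,1), with covariance E[X(s)X(t)] = s^{2β} φ(t/s) for 0 < s ≤ t, where φ(x) = E[X(1)X(x)]. Assume (H.1) holds: φ(x) = −λ(x−1)^α + ψ(x) with λ > 0, 0 < α ≤ 2β, and ψ twice differentiable on a neighborhood of [1,∞) with |ψ'(x)| ≤ C x^{α−1} for x > 1. Then for s ≥ 1, E[(X(s+1) − X(s))²] = 2λ s^{2β−α}(1 + u₁(s)) where u₁ is continuous and, for any η > 0, |u₁(s)| ≤ C_η s^{−δ₁} for s ≥ η, with δ₁ = 1−α if α < 1 and δ₁ = 2−α if α ≥ 1 (assuming additionally |ψ''(x)| ≤ C x^{−1}(x−1)^{α−1} and ψ'(1) = βψ(1) when α ≥ 1). -/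

import Mathlib

open MeasureTheory

set_option maxHeartbeats 1000000 in
/-- Lemma 4.1 of Campese–Nourdin–Nualart: for a centered Gaussian self-similar
process `X` of order `β ∈ (0,1)` with covariance `E[X(s)X(t)] = s^{2β} φ(t/s)`
for `0 < s ≤ t`, where `φ(x) = −λ(x−1)^α + ψ(x)` satisfies hypothesis (H.1),
there is a continuous function `u₁` with
`E[(X(s+1)−X(s))²] = 2λ s^{2β−α}(1+u₁(s))` for `s ≥ 1`, and for every `η > 0`
a constant `C_η > 0` with `|u₁(s)| ≤ C_η s^{−δ₁}` for `s ≥ η`, where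
`δ₁ = 1−α` if `α < 1` and `δ₁ = 2−α` if `α ≥ 1`. -/
theorem variance_unit_increment_selfsimilar {Ω : Type*} [MeasurableSpace Ω]
    (P : Measure Ω) [IsProbabilityMeasure P] (X : ℝ → Ω → ℝ)
    (β lam α C : ℝ) (ψ : ℝ → ℝ)
    (hβ : β ∈ Set.Ioo (0 : ℝ) 1) (hlam : 0 < lam) (hα : 0 < α) (hαβ : α ≤ 2 * β)
    (hC : 0 ≤ C)
    (hmean : ∀ t : ℝ, ∫ ω, X t ω ∂P = 0)
    (hInt : ∀ s t : ℝ, Integrable (fun ω => X s ω * X t ω) P)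
    (hcov : ∀ s t : ℝ, 0 < s → s ≤ t →
      ∫ ω, X s ω * X t ω ∂P = s ^ (2 * β) * (-lam * (t / s - 1) ^ α + ψ (t / s)))
    (hψsmooth : ∃ U : Set ℝ, IsOpen U ∧ Set.Ici (1 : ℝ) ⊆ U ∧ ContDiffOn ℝ 2 ψ U)
    (hψ' : ∀ x : ℝ, 1 < x → |deriv ψ x| ≤ C * x ^ (α - 1))
    (hψ'' : 1 ≤ α → ∀ x : ℝ, 1 < x → |deriv (deriv ψ) x| ≤ C * x⁻¹ * (x - 1) ^ (α - 1))
    (hψ1 : 1 ≤ α → deriv ψ 1 = β * ψ 1) :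
    ∃ u₁ : ℝ → ℝ, ContinuousOn u₁ (Set.Ici (0 : ℝ)) ∧
      (∀ s : ℝ, 1 ≤ s →
        ∫ ω, (X (s + 1) ω - X s ω) ^ 2 ∂P = 2 * lam * s ^ (2 * β - α) * (1 + u₁ s)) ∧
      (∀ η : ℝ, 0 < η → ∃ Cη > 0, ∀ s : ℝ, η ≤ s →
        |u₁ s| ≤ Cη * s ^ (-(if α < 1 then 1 - α else 2 - α))) := by
  obtain ⟨hβ0, hβ1⟩ := hβ
  obtain ⟨U, hUopen, hU1, hψC2⟩ := hψsmooth
  have hβ2 : 2 * β < 2 := by linarith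
  have hα2 : α < 2 := lt_of_le_of_lt hαβ hβ2
  have hmem : ∀ h : ℝ, 0 ≤ h → (1 + h) ∈ U := fun h hh =>
    hU1 (by simp only [Set.mem_Ici]; linarith)
  have hψdiff : ∀ x ∈ U, HasDerivAt ψ (deriv ψ x) x := fun x hx =>
    ((hψC2.differentiableOn (by norm_num)).differentiableAt (hUopen.mem_nhds hx)).hasDerivAt
  have hdψC1 : ContDiffOn ℝ 1 (deriv ψ) U := hψC2.deriv_of_isOpen hUopen (by norm_num)
  have hdψdiff : ∀ x ∈ U, HasDerivAt (deriv ψ) (deriv (deriv ψ) x) x := fun x hx =>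
    ((hdψC1.differentiableOn (by norm_num)).differentiableAt (hUopen.mem_nhds hx)).hasDerivAt
  -- the functions F, F', F''
  set F : ℝ → ℝ := fun h => ψ 1 * ((1 + h) ^ (2*β) + 1) - 2 * ψ (1 + h) with hFdef
  set F₁ : ℝ → ℝ := fun h => ψ 1 * (2*β * (1 + h) ^ (2*β - 1)) - 2 * deriv ψ (1 + h) with hF₁def
  set F₂ : ℝ → ℝ :=
    fun h => ψ 1 * (2*β * ((2*β - 1) * (1 + h) ^ (2*β - 1 - 1))) - 2 * deriv (deriv ψ) (1 + h)
    with hF₂def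
  have hchain : ∀ h : ℝ, 0 ≤ h → HasDerivAt (fun x : ℝ => ψ (1 + x)) (deriv ψ (1 + h)) h := by
    intro h hh
    have := (hψdiff _ (hmem h hh)).comp h ((hasDerivAt_id h).const_add 1)
    simpa [Function.comp_def] using this
  have hchain2 : ∀ h : ℝ, 0 ≤ h →
      HasDerivAt (fun x : ℝ => deriv ψ (1 + x)) (deriv (deriv ψ) (1 + h)) h := by
    intro h hh
    have := (hdψdiff _ (hmem h hh)).comp h ((hasDerivAt_id h).const_add 1)
    simpa [Function.comp_def] using this
  have hrpow : ∀ (t h : ℝ), 0 ≤ h →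
      HasDerivAt (fun x : ℝ => (1 + x) ^ t) (t * (1 + h) ^ (t - 1)) h := by
    intro t h hh
    have := (Real.hasDerivAt_rpow_const (x := 1 + h) (p := t)
      (Or.inl (by positivity))).comp h ((hasDerivAt_id h).const_add 1)
    simpa [Function.comp_def] using this
  have hFderiv : ∀ h : ℝ, 0 ≤ h → HasDerivAt F (F₁ h) h := fun h hh =>
    (((hrpow (2*β) h hh).add_const 1).const_mul (ψ 1)).sub ((hchain h hh).const_mul 2)
  have hF₁deriv : ∀ h : ℝ, 0 ≤ h → HasDerivAt F₁ (F₂ h) h := fun h hh =>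
    (((hrpow (2*β-1) h hh).const_mul (2*β)).const_mul (ψ 1)).sub ((hchain2 h hh).const_mul 2)
  have hF0 : F 0 = 0 := by simp [hFdef]; ring
  -- uniform bound on basic rpow terms
  have hbase : ∀ h : ℝ, 0 ≤ h → h ≤ 1 → ∀ t : ℝ, t ≤ 1 → (1 + h) ^ t ≤ 2 := by
    intro h h0 h1 t ht
    calc (1+h) ^ t ≤ (1+h) ^ (1:ℝ) := Real.rpow_le_rpow_of_exponent_le (by linarith) ht
    _ = 1 + h := Real.rpow_one _
    _ ≤ 2 := by linarith
  have hbasepos : ∀ h : ℝ, 0 ≤ h → ∀ t : ℝ, 0 ≤ (1 + h) ^ t := by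
    intro h h0 t; positivity
  set M : ℝ := 4*β*|ψ 1| + 4*C + 1 with hMdef
  have hMpos : 0 < M := by positivity
  have hF₁bound : ∀ h : ℝ, 0 < h → h ≤ 1 → |F₁ h| ≤ M := by
    intro h h0 h1
    have h1x : (1:ℝ) < 1 + h := by linarith
    have e1 : (1+h) ^ (2*β-1) ≤ 2 := hbase h h0.le h1 _ (by linarith)
    have e1' : 0 ≤ (1+h) ^ (2*β-1) := hbasepos h h0.le _
    have e2 : |deriv ψ (1+h)| ≤ 2*C := by
      refine le_trans (hψ' _ h1x) ?_
      have := hbase h h0.le h1 (α-1) (by linarith)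
      nlinarith
    have e3 := abs_nonneg (ψ 1)
    have t1 : |ψ 1 * (2*β * (1+h) ^ (2*β-1))| ≤ |ψ 1| * (2*β*2) := by
      rw [abs_mul]
      refine mul_le_mul_of_nonneg_left ?_ e3
      rw [abs_of_nonneg (by positivity : (0:ℝ) ≤ 2*β * (1+h) ^ (2*β-1))]
      nlinarith
    have t2 : |2 * deriv ψ (1+h)| ≤ 2*(2*C) := by
      rw [abs_mul, abs_two]
      nlinarith [abs_nonneg (deriv ψ (1+h))]
    calc |F₁ h| ≤ |ψ 1 * (2*β * (1+h) ^ (2*β-1))| + |2 * deriv ψ (1+h)| := abs_sub _ _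
      _ ≤ |ψ 1| * (2*β*2) + 2*(2*C) := add_le_add t1 t2
      _ ≤ M := by rw [hMdef]; nlinarith
  have hF₂bound : 1 ≤ α → ∀ h : ℝ, 0 < h → h ≤ 1 → |F₂ h| ≤ M := by
    intro hα1 h h0 h1
    have h1x : (1:ℝ) < 1 + h := by linarith
    have e1 : (1+h) ^ (2*β-1-1) ≤ 2 := hbase h h0.le h1 _ (by linarith)
    have e1' : 0 ≤ (1+h) ^ (2*β-1-1) := hbasepos h h0.le _
    have e2 : |deriv (deriv ψ) (1+h)| ≤ C := by
      refine le_trans (hψ'' hα1 _ h1x) ?_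
      have i1 : (1+h)⁻¹ ≤ 1 := by
        rw [inv_le_one_iff₀]; right; linarith
      have i2 : (1 + h - 1 : ℝ) ^ (α-1) ≤ 1 := by
        rw [show (1 + h - 1 : ℝ) = h by ring]
        exact Real.rpow_le_one h0.le h1 (by linarith)
      have i3 : (0:ℝ) < (1+h)⁻¹ := by positivity
      have i4 : (0:ℝ) ≤ (1 + h - 1 : ℝ) ^ (α-1) := by
        rw [show (1 + h - 1 : ℝ) = h by ring]; positivity
      have i5 : (1+h)⁻¹ * (1 + h - 1 : ℝ) ^ (α-1) ≤ 1 := by nlinarith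
      calc C * (1+h)⁻¹ * (1 + h - 1 : ℝ) ^ (α-1)
          = C * ((1+h)⁻¹ * (1 + h - 1 : ℝ) ^ (α-1)) := by ring
        _ ≤ C * 1 := mul_le_mul_of_nonneg_left i5 hC
        _ = C := mul_one C
    have e3 := abs_nonneg (ψ 1)
    have eq1 : |(2*β - 1) * (1+h)^(2*β-1-1)| ≤ 2 := by
      rw [abs_mul, abs_of_nonneg e1']
      have eb : |2*β - 1| ≤ 1 := by rw [abs_le]; constructor <;> linarith
      nlinarith [abs_nonneg (2*β-1)]
    have t1 : |ψ 1 * (2*β * ((2*β - 1) * (1+h) ^ (2*β-1-1)))| ≤ |ψ 1| * (2*β*2) := by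
      rw [abs_mul]
      refine mul_le_mul_of_nonneg_left ?_ e3
      rw [abs_mul, abs_of_nonneg (by positivity : (0:ℝ) ≤ 2*β)]
      nlinarith [abs_nonneg ((2*β - 1) * (1+h) ^ (2*β-1-1))]
    have t2 : |2 * deriv (deriv ψ) (1+h)| ≤ 2*C := by
      rw [abs_mul, abs_two]
      nlinarith [abs_nonneg (deriv (deriv ψ) (1+h))]
    calc |F₂ h| ≤ |ψ 1 * (2*β * ((2*β - 1) * (1+h) ^ (2*β-1-1)))|
          + |2 * deriv (deriv ψ) (1+h)| := abs_sub _ _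
      _ ≤ |ψ 1| * (2*β*2) + 2*C := add_le_add t1 t2
      _ ≤ M := by rw [hMdef]; nlinarith
  -- key estimate on F
  have hkey : ∀ h : ℝ, 0 < h → h ≤ 1 →
      |F h| ≤ M * h ^ (if α < 1 then (1:ℝ) else 2) := by
    intro h h0 h1
    have hFcont : ContinuousOn F (Set.Icc 0 h) := fun x hx =>
      ((hFderiv x hx.1).continuousAt).continuousWithinAt
    obtain ⟨c, hc, hceq⟩ := exists_hasDerivAt_eq_slope F F₁ h0 hFcont
      (fun x hx => hFderiv x hx.1.le)
    have hFh : F h = F₁ c * h := by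
      rw [hF0, sub_zero, sub_zero, eq_div_iff h0.ne'] at hceq
      linarith [hceq]
    by_cases hα1 : α < 1
    · rw [if_pos hα1, Real.rpow_one, hFh, abs_mul, abs_of_pos h0]
      exact mul_le_mul_of_nonneg_right (hF₁bound c hc.1 (le_trans hc.2.le h1)) h0.le
    · push_neg at hα1
      -- second mean value theorem step
      have hF₁cont : ContinuousOn F₁ (Set.Icc 0 c) := fun x hx =>
        ((hF₁deriv x hx.1).continuousAt).continuousWithinAt
      obtain ⟨c', hc', hceq'⟩ := exists_hasDerivAt_eq_slope F₁ F₂ hc.1 hF₁cont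
        (fun x hx => hF₁deriv x hx.1.le)
      have hF₁0 : F₁ 0 = 0 := by
        have h1' := hψ1 hα1
        show ψ 1 * (2*β * (1 + (0:ℝ)) ^ (2*β - 1)) - 2 * deriv ψ (1 + 0) = 0
        rw [add_zero, Real.one_rpow, h1']
        ring
      have hF₁c : F₁ c = F₂ c' * c := by
        rw [hF₁0, sub_zero, sub_zero, eq_div_iff hc.1.ne'] at hceq'
        linarith [hceq']
      rw [if_neg (not_lt.mpr hα1)]
      have hch : c ≤ h := hc.2.le
      have hc'1 : c' ≤ 1 := le_trans hc'.2.le (le_trans hch h1)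
      have hb := hF₂bound hα1 c' hc'.1 hc'1
      have h2 : h ^ (2:ℝ) = h * h := by
        rw [show (2:ℝ) = ((2:ℕ):ℝ) by norm_num, Real.rpow_natCast]; ring
      rw [h2, hFh, hF₁c, abs_mul, abs_mul, abs_of_pos h0, abs_of_pos hc.1]
      nlinarith [mul_le_mul_of_nonneg_right (mul_le_mul_of_nonneg_right hb hc.1.le) h0.le,
        mul_le_mul_of_nonneg_right (mul_le_mul_of_nonneg_left hch hMpos.le) h0.le,
        abs_nonneg (F₂ c')]
  -- the function u₁
  set G : ℝ → ℝ := fun s => F (1/s) * s ^ α / (2 * lam) with hGdef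
  refine ⟨fun s => G (max s 1), ?_, ?_, ?_⟩
  · -- continuity
    have hmaxpos : ∀ s : ℝ, (0:ℝ) < max s 1 := fun s => lt_of_lt_of_le one_pos (le_max_right s 1)
    have hcont : Continuous fun s : ℝ => G (max s 1) := by
      rw [continuous_iff_continuousAt]
      intro s
      have hm : ContinuousAt (fun s : ℝ => max s 1) s := (continuous_id.max continuous_const).continuousAt
      have hms := hmaxpos s
      have hinv : ContinuousAt (fun s : ℝ => 1 / max s 1) s :=
        (continuousAt_const.div hm hms.ne')
      have hw : ContinuousAt (fun s : ℝ => 1 + 1 / max s 1) s := continuousAt_const.add hinv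
      have hwpos : (0:ℝ) < 1 + 1 / max s 1 := by positivity
      have hrp : ContinuousAt (fun s : ℝ => (1 + 1 / max s 1) ^ (2*β)) s :=
        hw.rpow_const (Or.inl hwpos.ne')
      have hψc : ContinuousAt (fun s : ℝ => ψ (1 + 1 / max s 1)) s := by
        have hu : (1 + 1 / max s 1) ∈ U := hmem _ (by positivity)
        have := ContinuousAt.comp (x := s) (f := fun s : ℝ => 1 + 1 / max s 1)
          ((hψdiff _ hu).differentiableAt.continuousAt) hw
        simpa [Function.comp_def] using this
      have hpa : ContinuousAt (fun s : ℝ => (max s 1) ^ α) s :=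
        hm.rpow_const (Or.inl hms.ne')
      have : ContinuousAt (fun s : ℝ =>
          (ψ 1 * ((1 + 1 / max s 1) ^ (2*β) + 1) - 2 * ψ (1 + 1 / max s 1))
            * (max s 1) ^ α / (2 * lam)) s := by
        exact (((continuousAt_const.mul (hrp.add continuousAt_const)).sub
          (continuousAt_const.mul hψc)).mul hpa).div_const _
      exact this
    exact hcont.continuousOn
  · -- the identity for s ≥ 1
    intro s hs
    have hs0 : (0:ℝ) < s := lt_of_lt_of_le one_pos hs
    have hmax : max s 1 = s := max_eq_left hs
    have hs1 : (0:ℝ) < s + 1 := by linarith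
    -- expand the square
    have hI1 := hInt (s+1) (s+1)
    have hI2 := hInt s s
    have hI3 := hInt s (s+1)
    have hfun : (fun ω => (X (s+1) ω - X s ω) ^ 2) =
        fun ω => (X (s+1) ω * X (s+1) ω + X s ω * X s ω) - 2 * (X s ω * X (s+1) ω) := by
      funext ω; ring
    have hexp : ∫ ω, (X (s+1) ω - X s ω) ^ 2 ∂P =
        (∫ ω, X (s+1) ω * X (s+1) ω ∂P) + (∫ ω, X s ω * X s ω ∂P)
          - 2 * ∫ ω, X s ω * X (s+1) ω ∂P := by
      calc ∫ ω, (X (s+1) ω - X s ω) ^ 2 ∂P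
          = ∫ ω, (X (s+1) ω * X (s+1) ω + X s ω * X s ω) - 2 * (X s ω * X (s+1) ω) ∂P := by
            rw [hfun]
        _ = (∫ ω, X (s+1) ω * X (s+1) ω + X s ω * X s ω ∂P)
            - ∫ ω, 2 * (X s ω * X (s+1) ω) ∂P := integral_sub (hI1.add hI2) (hI3.const_mul 2)
        _ = (∫ ω, X (s+1) ω * X (s+1) ω ∂P) + (∫ ω, X s ω * X s ω ∂P)
            - 2 * ∫ ω, X s ω * X (s+1) ω ∂P := by
            rw [integral_add hI1 hI2, integral_const_mul]
    have hA : ∫ ω, X (s+1) ω * X (s+1) ω ∂P = (s+1) ^ (2*β) * ψ 1 := by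
      rw [hcov (s+1) (s+1) hs1 le_rfl, div_self hs1.ne', sub_self,
        Real.zero_rpow hα.ne', mul_zero, zero_add]
    have hB : ∫ ω, X s ω * X s ω ∂P = s ^ (2*β) * ψ 1 := by
      rw [hcov s s hs0 le_rfl, div_self hs0.ne', sub_self,
        Real.zero_rpow hα.ne', mul_zero, zero_add]
    have hdiv : (s+1)/s = 1 + 1/s := by field_simp
    have hC3 : ∫ ω, X s ω * X (s+1) ω ∂P
        = s ^ (2*β) * (-lam * (1/s) ^ α + ψ (1 + 1/s)) := by
      rw [hcov s (s+1) hs0 (by linarith), hdiv, show (1 + 1/s - 1 : ℝ) = 1/s by ring]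
    -- rpow arithmetic
    have f1 : s ^ (2*β - α) * s ^ α = s ^ (2*β) := by
      rw [← Real.rpow_add hs0]; ring_nf
    have f2 : s ^ (2*β) * (1/s) ^ α = s ^ (2*β - α) := by
      rw [Real.rpow_sub hs0, one_div, Real.inv_rpow hs0.le]
      field_simp
    have f3 : (s+1) ^ (2*β) = s ^ (2*β) * (1 + 1/s) ^ (2*β) := by
      rw [show (s + 1 : ℝ) = s * (1 + 1/s) by field_simp, Real.mul_rpow hs0.le (by positivity)]
    have hGs : 2 * lam * s ^ (2*β-α) * G s
        = s ^ (2*β) * (ψ 1 * ((1 + 1/s) ^ (2*β) + 1) - 2 * ψ (1 + 1/s)) := by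
      have hl : (2*lam) ≠ 0 := by positivity
      simp only [hGdef, hFdef]
      rw [show 2 * lam * s ^ (2*β-α)
            * ((ψ 1 * ((1 + 1/s) ^ (2*β) + 1) - 2 * ψ (1 + 1/s)) * s ^ α / (2*lam))
          = (s ^ (2*β-α) * s ^ α) * (ψ 1 * ((1 + 1/s) ^ (2*β) + 1) - 2 * ψ (1 + 1/s))
            * (2*lam / (2*lam)) from by ring, div_self hl, f1]
      ring
    show _ = 2 * lam * s ^ (2*β - α) * (1 + G (max s 1))
    rw [hexp, hA, hB, hC3, hmax]
    linear_combination ψ 1 * f3 - hGs + 2*lam*f2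
  · -- the bound
    intro η hη
    set e : ℝ := if α < 1 then (1:ℝ) else 2 with hedef
    have hδ : (-(if α < 1 then 1 - α else 2 - α)) = α - e := by
      rw [hedef]; split <;> ring
    set K : ℝ := M / (2*lam) + 1 with hKdef
    have hK1 : M / (2*lam) ≤ K := by rw [hKdef]; linarith
    have hK0 : 0 < K := by positivity
    have hGbound : ∀ s : ℝ, 1 ≤ s → |G s| ≤ M / (2*lam) * s ^ (α - e) := by
      intro s hs
      have hs0 : (0:ℝ) < s := lt_of_lt_of_le one_pos hs
      have hh0 : (0:ℝ) < 1/s := by positivity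
      have hh1 : 1/s ≤ 1 := by
        rw [div_le_one hs0]; linarith
      have hk := hkey (1/s) hh0 hh1
      have hsa : (0:ℝ) < s ^ α := Real.rpow_pos_of_pos hs0 α
      have hre : (1/s) ^ e = s ^ (-e) := by
        rw [one_div, Real.inv_rpow hs0.le, ← Real.rpow_neg hs0.le]
      have hre2 : s ^ (-e) * s ^ α = s ^ (α - e) := by
        rw [← Real.rpow_add hs0]; ring_nf
      simp only [hGdef]
      rw [abs_div, abs_mul, abs_of_pos hsa, abs_of_pos (by positivity : (0:ℝ) < 2*lam)]
      rw [div_le_iff₀ (by positivity : (0:ℝ) < 2*lam)]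
      calc |F (1/s)| * s ^ α ≤ M * (1/s) ^ e * s ^ α := by
            exact mul_le_mul_of_nonneg_right (by rwa [hedef]) hsa.le
        _ = M * (s ^ (-e) * s ^ α) := by rw [hre]; ring
        _ = M * s ^ (α - e) := by rw [hre2]
        _ = M / (2*lam) * s ^ (α-e) * (2*lam) := by field_simp
    refine ⟨K, hK0, ?_⟩
    intro s hsη
    have hs0 : (0:ℝ) < s := lt_of_lt_of_le hη hsη
    rw [hδ]
    show |G (max s 1)| ≤ K * s ^ (α - e)
    have hae : α - e ≤ 0 := by
      rw [hedef]; split <;> [linarith; (push_neg at *; linarith)]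
    by_cases hs1 : 1 ≤ s
    · rw [max_eq_left hs1]
      refine le_trans (hGbound s hs1) ?_
      have : (0:ℝ) < s ^ (α - e) := Real.rpow_pos_of_pos hs0 _
      nlinarith
    · push_neg at hs1
      rw [max_eq_right hs1.le]
      have h1 : |G 1| ≤ M / (2*lam) := by
        have := hGbound 1 le_rfl
        rwa [Real.one_rpow, mul_one] at this
      have h2 : (1:ℝ) ≤ s ^ (α - e) :=
        Real.one_le_rpow_of_pos_of_le_one_of_nonpos hs0 hs1.le hae
      calc |G 1| ≤ M/(2*lam) := h1
        _ ≤ K := hK1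
        _ = K * 1 := (mul_one K).symm
        _ ≤ K * s ^ (α - e) := mul_le_mul_of_nonneg_left h2 hK0.le
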